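/- arXiv:2101.12295 — 3 statements merged into one kernel-verified Lean document; each statement's English description precedes it below -/
import Mathlib

section
/- For the Laplacian on (a,b) with antiperiodic boundary conditions, whose eigenvalues are (2k−1)²π²/(b−a)² each with multiplicity 2 (k ∈ ℕ), ζ(n;T) = (2^{2n} − 1)(b−a)^{2n} |B_{2n}| / (2n)! for every n ∈ ℕ; in particular ζ(1;T) = (b−a)²/4, ζ(2;T) = (b−a)⁴/48, ζ(3;T) = (b−a)⁶/480, ζ(4;T) = 17(b−a)⁸/80640. -/
open Real
set_option maxHeartbeats 1000000


lemma bern5 : bernoulli' 5 = 0 := by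
  have h2 : Nat.choose 5 2 = 10 := by decide
  have h3 : Nat.choose 5 3 = 10 := by decide
  rw [bernoulli'_def]
  norm_num [Finset.sum_range_succ, h2, h3]

lemma bern6 : bernoulli' 6 = 1/42 := by
  have h2 : Nat.choose 6 2 = 15 := by decide
  have h3 : Nat.choose 6 3 = 20 := by decide
  have h4 : Nat.choose 6 4 = 15 := by decide
  rw [bernoulli'_def]
  norm_num [Finset.sum_range_succ, h2, h3, h4, bern5]

lemma bern7 : bernoulli' 7 = 0 := by
  have h2 : Nat.choose 7 2 = 21 := by decide
  have h3 : Nat.choose 7 3 = 35 := by decide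
  have h4 : Nat.choose 7 4 = 35 := by decide
  have h5 : Nat.choose 7 5 = 21 := by decide
  rw [bernoulli'_def]
  norm_num [Finset.sum_range_succ, h2, h3, h4, h5, bern5, bern6]

lemma bern8 : bernoulli' 8 = -1/30 := by
  have h2 : Nat.choose 8 2 = 28 := by decide
  have h3 : Nat.choose 8 3 = 56 := by decide
  have h4 : Nat.choose 8 4 = 70 := by decide
  have h5 : Nat.choose 8 5 = 56 := by decide
  have h6 : Nat.choose 8 6 = 28 := by decide
  rw [bernoulli'_def]
  norm_num [Finset.sum_range_succ, h2, h3, h4, h5, h6, bern5, bern6, bern7]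

lemma bq2 : bernoulli 2 = 1/6 := by
  rw [bernoulli_eq_bernoulli'_of_ne_one (by norm_num)]; norm_num
lemma bq4 : bernoulli 4 = -1/30 := by
  rw [bernoulli_eq_bernoulli'_of_ne_one (by norm_num)]; norm_num
lemma bq6 : bernoulli 6 = 1/42 := by
  rw [bernoulli_eq_bernoulli'_of_ne_one (by norm_num)]; exact bern6
lemma bq8 : bernoulli 8 = -1/30 := by
  rw [bernoulli_eq_bernoulli'_of_ne_one (by norm_num)]; exact bern8

lemma oddHasSum {n : ℕ} (hn : n ≠ 0) :
    HasSum (fun j : ℕ => 1 / ((2 * j + 1 : ℕ) : ℝ) ^ (2 * n))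
      ((1 - ((2:ℝ)^(2*n))⁻¹) *
        ((-1 : ℝ) ^ (n + 1) * (2 : ℝ) ^ (2 * n - 1) * π ^ (2 * n) *
          (bernoulli (2 * n) : ℝ) / (Nat.factorial (2*n)))) := by
  set Z : ℝ := (-1 : ℝ) ^ (n + 1) * (2 : ℝ) ^ (2 * n - 1) * π ^ (2 * n) *
      (bernoulli (2 * n) : ℝ) / (Nat.factorial (2*n)) with hZ
  have S := hasSum_zeta_nat hn
  have hE : HasSum (fun j : ℕ => 1 / ((2 * j : ℕ) : ℝ) ^ (2 * n)) (((2:ℝ)^(2*n))⁻¹ * Z) := by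
    have h := S.mul_left ((2:ℝ)^(2*n))⁻¹
    refine h.congr_fun fun j => ?_
    push_cast
    rw [mul_pow, one_div, one_div, mul_inv]
  have hOsum : Summable (fun j : ℕ => 1 / ((2 * j + 1 : ℕ) : ℝ) ^ (2 * n)) :=
    S.summable.comp_injective (fun x y h => by omega)
  have hO := hOsum.hasSum
  have huniq : ((2:ℝ)^(2*n))⁻¹ * Z + (∑' j : ℕ, 1 / ((2 * j + 1 : ℕ) : ℝ) ^ (2 * n)) = Z :=
    (hE.even_add_odd hO).unique S
  have ht : (∑' j : ℕ, 1 / ((2 * j + 1 : ℕ) : ℝ) ^ (2 * n)) = (1 - ((2:ℝ)^(2*n))⁻¹) * Z := by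
    linarith
  exact ht ▸ hO

lemma general (a b : ℝ) (hab : a < b) (n : ℕ) (hn : 1 ≤ n) :
    2 * ∑' k : ℕ+, (((2 * (k : ℝ) - 1)^2 * Real.pi^2 / (b - a)^2)^n)⁻¹ =
      (2^(2*n) - 1) * (b - a)^(2*n) * |(bernoulli (2*n) : ℝ)| / (Nat.factorial (2*n)) := by
  have hba : (0:ℝ) < b - a := sub_pos.mpr hab
  have hπ : (0:ℝ) < π := pi_pos
  have hn0 : n ≠ 0 := by omega
  set C : ℝ := (b - a)^(2*n) * (π^(2*n))⁻¹ with hC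
  -- reindex
  have hre : (∑' k : ℕ+, (((2 * (k : ℝ) - 1)^2 * Real.pi^2 / (b - a)^2)^n)⁻¹)
      = ∑' j : ℕ, C * (1 / ((2 * j + 1 : ℕ) : ℝ) ^ (2 * n)) := by
    rw [← Equiv.pnatEquivNat.symm.tsum_eq]
    refine tsum_congr fun j => ?_
    have hk : ((Equiv.pnatEquivNat.symm j : ℕ+) : ℝ) = (j : ℝ) + 1 := by
      simp [Equiv.pnatEquivNat]
    rw [hk]
    have h1 : (2 * ((j:ℝ) + 1) - 1) = ((2 * j + 1 : ℕ) : ℝ) := by push_cast; ring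
    rw [h1]
    have hx : (0:ℝ) < ((2 * j + 1 : ℕ) : ℝ) := by positivity
    rw [hC]
    field_simp
    rw [div_pow, mul_pow, ← pow_mul, ← pow_mul, ← pow_mul, div_mul_cancel₀ _ (pow_pos hba _).ne']
    ring
  rw [hre, tsum_mul_left, (oddHasSum hn0).tsum_eq]
  -- now pure algebra, plus the absolute value of bernoulli
  have h2 : (2:ℝ) ^ (2*n - 1) = 2^(2*n) / 2 := by
    rw [eq_div_iff (two_ne_zero' ℝ), ← pow_succ]
    congr 1
    omega
  have key : 2 * (C * ((1 - ((2:ℝ)^(2*n))⁻¹) *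
      ((-1 : ℝ) ^ (n + 1) * (2 : ℝ) ^ (2 * n - 1) * π ^ (2 * n) *
        (bernoulli (2 * n) : ℝ) / (Nat.factorial (2*n))))) =
      (2^(2*n) - 1) * (b - a)^(2*n) * ((-1 : ℝ) ^ (n + 1) * (bernoulli (2*n) : ℝ)) /
        (Nat.factorial (2*n)) := by
    rw [h2, hC]
    have hf : ((Nat.factorial (2*n) : ℝ)) ≠ 0 := by positivity
    have hp : (π:ℝ)^(2*n) ≠ 0 := by positivity
    have h2n : (2:ℝ)^(2*n) ≠ 0 := by positivity
    field_simp
  rw [key]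
  -- show |B| = (-1)^(n+1) B using nonnegativity
  have hsum_nonneg : (0:ℝ) ≤ C * ((1 - ((2:ℝ)^(2*n))⁻¹) *
      ((-1 : ℝ) ^ (n + 1) * (2 : ℝ) ^ (2 * n - 1) * π ^ (2 * n) *
        (bernoulli (2 * n) : ℝ) / (Nat.factorial (2*n)))) := by
    rw [← (oddHasSum hn0).tsum_eq, ← tsum_mul_left]
    have hC0 : 0 ≤ C := mul_nonneg (pow_nonneg hba.le _) (inv_nonneg.mpr (pow_nonneg hπ.le _))
    refine tsum_nonneg fun j => mul_nonneg hC0 (by positivity)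
  have hBnn : (0:ℝ) ≤ (-1 : ℝ) ^ (n + 1) * (bernoulli (2*n) : ℝ) := by
    by_contra hneg
    push_neg at hneg
    have hpos1 : (0:ℝ) < (2^(2*n) - 1) * (b - a)^(2*n) / (Nat.factorial (2*n)) := by
      have : (1:ℝ) < 2^(2*n) := by
        have : (2:ℝ)^0 < 2^(2*n) := by
          apply pow_lt_pow_right₀ one_lt_two (by omega)
        simpa using this
      have hfac : (0:ℝ) < (Nat.factorial (2*n) : ℝ) := by positivity
      exact div_pos (mul_pos (by linarith) (pow_pos hba _)) hfac
    have hlt : (2^(2*n) - 1) * (b - a)^(2*n) * ((-1 : ℝ) ^ (n + 1) * (bernoulli (2*n) : ℝ)) /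
        (Nat.factorial (2*n)) < 0 := by
      rw [show (2^(2*n) - 1) * (b - a)^(2*n) * ((-1 : ℝ) ^ (n + 1) * (bernoulli (2*n) : ℝ)) /
          (Nat.factorial (2*n)) = ((2^(2*n) - 1) * (b - a)^(2*n) / (Nat.factorial (2*n))) *
          ((-1 : ℝ) ^ (n + 1) * (bernoulli (2*n) : ℝ)) by ring]
      exact mul_neg_of_pos_of_neg hpos1 hneg
    linarith [key, hsum_nonneg, hlt]
  have habs : |(bernoulli (2*n) : ℝ)| = (-1 : ℝ) ^ (n + 1) * (bernoulli (2*n) : ℝ) := by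
    rw [← abs_of_nonneg hBnn, abs_mul, abs_pow, abs_neg, abs_one, one_pow, one_mul]
  rw [habs]

/-- For the antiperiodic Laplacian on `(a,b)`, whose eigenvalues are
`(2k−1)²π²/(b−a)²` each with multiplicity 2, one has
`ζ(n;T) = (2^{2n} − 1)(b−a)^{2n} |B_{2n}| / (2n)!` for every `n ≥ 1`; in particular
`ζ(1;T) = (b−a)²/4`, `ζ(2;T) = (b−a)⁴/48`, `ζ(3;T) = (b−a)⁶/480`,
`ζ(4;T) = 17(b−a)⁸/80640`. -/
theorem antiperiodic_laplacian_zeta (a b : ℝ) (hab : a < b) :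
    (∀ n : ℕ, 1 ≤ n →
      2 * ∑' k : ℕ+, (((2 * (k : ℝ) - 1)^2 * Real.pi^2 / (b - a)^2)^n)⁻¹ =
        (2^(2*n) - 1) * (b - a)^(2*n) * |(bernoulli (2*n) : ℝ)| / (Nat.factorial (2*n))) ∧
    2 * ∑' k : ℕ+, (((2 * (k : ℝ) - 1)^2 * Real.pi^2 / (b - a)^2))⁻¹ = (b - a)^2 / 4 ∧
    2 * ∑' k : ℕ+, (((2 * (k : ℝ) - 1)^2 * Real.pi^2 / (b - a)^2)^2)⁻¹ = (b - a)^4 / 48 ∧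
    2 * ∑' k : ℕ+, (((2 * (k : ℝ) - 1)^2 * Real.pi^2 / (b - a)^2)^3)⁻¹ = (b - a)^6 / 480 ∧
    2 * ∑' k : ℕ+, (((2 * (k : ℝ) - 1)^2 * Real.pi^2 / (b - a)^2)^4)⁻¹ =
      17 * (b - a)^8 / 80640 := by
  refine ⟨fun n hn => general a b hab n hn, ?_, ?_, ?_, ?_⟩
  · have h := general a b hab 1 le_rfl
    simp only [pow_one] at h
    rw [h]
    norm_num [bq2, Nat.factorial, abs_of_nonneg]; linarith
  · have h := general a b hab 2 (by norm_num)
    rw [h]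
    norm_num [bq4, Nat.factorial, abs_of_nonneg]; linarith
  · have h := general a b hab 3 (by norm_num)
    rw [h]
    norm_num [bq6, Nat.factorial, abs_of_nonneg]; linarith
  · have h := general a b hab 4 (by norm_num)
    rw [h]
    norm_num [bq8, Nat.factorial, abs_of_nonneg]; linarith
end

section
/- For V₀ > 0 and a bounded interval (a,b), Σ_{k=1}^∞ (k²π²/(b−a)² + V₀)^{−2} = [√V₀ (b−a) sinh(2√V₀(b−a)) − 2 cosh(2√V₀(b−a)) + 2V₀(b−a)² + 2] / [8V₀² sinh²(√V₀(b−a))]. -/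
open Real Filter Topology

lemma sinh_prod_tendsto (x : ℝ) :
    Tendsto (fun n : ℕ => π * x * ∏ j ∈ Finset.range n, (1 + x^2/((j:ℝ)+1)^2))
      atTop (𝓝 (Real.sinh (π*x))) := by
  have h := Complex.tendsto_euler_sin_prod (x * Complex.I)
  have h2 : Complex.sin (π * (x * Complex.I)) = Real.sinh (π * x) * Complex.I := by
    rw [show (π : ℂ) * (x * Complex.I) = ((π * x : ℝ) : ℂ) * Complex.I by push_cast; ring,
      Complex.sin_mul_I, Complex.ofReal_sinh]
  rw [h2] at h
  have h3 : ∀ n : ℕ, (π : ℂ) * (x * Complex.I) *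
      ∏ j ∈ Finset.range n, ((1 : ℂ) - (x * Complex.I) ^ 2 / ((j : ℂ) + 1) ^ 2)
      = ((π * x * ∏ j ∈ Finset.range n, (1 + x^2/((j:ℝ)+1)^2) : ℝ) : ℂ) * Complex.I := by
    intro n
    have : ∀ j ∈ Finset.range n, ((1 : ℂ) - (x * Complex.I) ^ 2 / ((j : ℂ) + 1) ^ 2)
        = ((1 + x^2/((j:ℝ)+1)^2 : ℝ) : ℂ) := by
      intro j _
      push_cast
      rw [mul_pow, Complex.I_sq]
      ring
    rw [Finset.prod_congr rfl this, ← Complex.ofReal_prod]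
    push_cast
    ring
  simp_rw [h3] at h
  have h4 : Tendsto (fun n : ℕ =>
      ((π * x * ∏ j ∈ Finset.range n, (1 + x^2/((j:ℝ)+1)^2) : ℝ) : ℂ))
      atTop (𝓝 ((Real.sinh (π*x) : ℝ) : ℂ)) := by
    have := h.mul_const (-Complex.I)
    simpa [mul_assoc, Complex.I_mul_I] using this
  exact Filter.tendsto_ofReal_iff.mp h4

lemma summable_log_term (x : ℝ) :
    Summable (fun k : ℕ => Real.log (1 + x^2/((k:ℝ)+1)^2)) := by
  have hb : Summable (fun k : ℕ => x^2 * (1/((k:ℝ)+1)^2)) := by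
    apply Summable.mul_left
    exact_mod_cast (summable_nat_add_iff 1).mpr (Real.summable_one_div_nat_pow.mpr one_lt_two)
  apply Summable.of_nonneg_of_le (fun k => ?_) (fun k => ?_) hb
  · apply Real.log_nonneg
    have : (0:ℝ) ≤ x^2/((k:ℝ)+1)^2 := by positivity
    linarith
  · calc Real.log (1 + x^2/((k:ℝ)+1)^2) ≤ (1 + x^2/((k:ℝ)+1)^2) - 1 :=
        Real.log_le_sub_one_of_pos (by positivity)
      _ = x^2 * (1/((k:ℝ)+1)^2) := by ring

lemma log_hasSum (x : ℝ) (hx : 0 < x) :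
    HasSum (fun k : ℕ => Real.log (1 + x^2/((k:ℝ)+1)^2))
      (Real.log (Real.sinh (π*x)) - Real.log (π*x)) := by
  have hpx : 0 < π * x := by positivity
  have hs : 0 < Real.sinh (π*x) := Real.sinh_pos_iff.mpr hpx
  have hfac : ∀ j : ℕ, (0:ℝ) < 1 + x^2/((j:ℝ)+1)^2 := fun j => by positivity
  have ht := (Real.continuousAt_log hs.ne').tendsto.comp (sinh_prod_tendsto x)
  have heq : ∀ n : ℕ, Real.log (π * x * ∏ j ∈ Finset.range n, (1 + x^2/((j:ℝ)+1)^2))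
      = Real.log (π*x) + ∑ j ∈ Finset.range n, Real.log (1 + x^2/((j:ℝ)+1)^2) := by
    intro n
    rw [Real.log_mul hpx.ne' (Finset.prod_pos (fun j _ => hfac j)).ne',
      Real.log_prod (fun j _ => (hfac j).ne')]
  rw [(summable_log_term x).hasSum_iff_tendsto_nat]
  have := ht.sub (tendsto_const_nhds (x := Real.log (π*x)))
  refine this.congr (fun n => ?_)
  simp only [Function.comp]
  rw [heq n]
  ring

lemma hasDerivAt_log_term (c y : ℝ) (hc : 0 < c) :
    HasDerivAt (fun y : ℝ => Real.log (1 + y^2/c^2)) (2*y/(c^2+y^2)) y := by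
  have h1 : HasDerivAt (fun y : ℝ => 1 + y^2/c^2) (2*y/c^2) y := by
    simpa using ((hasDerivAt_pow 2 y).div_const (c^2)).const_add 1
  have h2 := h1.log (by positivity)
  convert h2 using 1
  field_simp

lemma summable_inv_sq_add (x : ℝ) :
    Summable (fun k : ℕ => ((((k:ℝ)+1)^2 + x^2))⁻¹) := by
  have hb : Summable (fun k : ℕ => 1/((k:ℝ)+1)^2) := by
    exact_mod_cast (summable_nat_add_iff 1).mpr (Real.summable_one_div_nat_pow.mpr one_lt_two)
  apply Summable.of_nonneg_of_le (fun k => by positivity) (fun k => ?_) hb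
  rw [one_div]
  apply inv_anti₀ (by positivity)
  nlinarith [sq_nonneg x, sq_nonneg ((k:ℝ)+1)]

lemma tsum_inv_sq_add (x : ℝ) (hx : 0 < x) :
    ∑' k : ℕ, ((((k:ℝ)+1)^2 + x^2))⁻¹ =
      (π * Real.cosh (π*x) / Real.sinh (π*x) - 1/x) / (2*x) := by
  have hpx : 0 < π * x := by positivity
  have hs : 0 < Real.sinh (π*x) := Real.sinh_pos_iff.mpr hpx
  -- derivative of the log-sum
  set R : ℝ := x + 1 with hR
  have hxR : x ∈ Set.Ioo (0:ℝ) R := ⟨hx, by simp [hR]⟩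
  have hb : Summable (fun k : ℕ => 1/((k:ℝ)+1)^2) := by
    exact_mod_cast (summable_nat_add_iff 1).mpr (Real.summable_one_div_nat_pow.mpr one_lt_two)
  have hu : Summable (fun k : ℕ => 2*R/((k:ℝ)+1)^2) := by
    exact (hb.mul_left (2*R)).congr (fun k => by rw [mul_one_div])
  have hG : HasDerivAt (fun y : ℝ => ∑' k : ℕ, Real.log (1 + y^2/((k:ℝ)+1)^2))
      (∑' k : ℕ, 2*x/(((k:ℝ)+1)^2+x^2)) x := by
    apply hasDerivAt_tsum_of_isPreconnected hu isOpen_Ioo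
      (isPreconnected_Ioo) (fun k y _ => hasDerivAt_log_term ((k:ℝ)+1) y (by positivity))
      (fun k y hy => ?_) hxR (by simpa using (summable_log_term x)) hxR
    · rw [Real.norm_eq_abs, abs_div, abs_of_nonneg (by nlinarith [hy.1] : (0:ℝ) ≤ 2*y),
        abs_of_pos (by positivity : (0:ℝ) < ((k:ℝ)+1)^2+y^2)]
      rw [div_le_div_iff₀ (by positivity) (by positivity)]
      nlinarith [hy.1, hy.2, sq_nonneg y, sq_nonneg ((k:ℝ)+1), hxR.1]
  -- closed form has same derivative
  have hcf : HasDerivAt (fun y : ℝ => Real.log (Real.sinh (π*y)) - Real.log (π*y))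
      (π * Real.cosh (π*x) / Real.sinh (π*x) - 1/x) x := by
    have hmul : HasDerivAt (fun y : ℝ => π*y) π x := by
      simpa using (hasDerivAt_id x).const_mul π
    have hsinh : HasDerivAt (fun y : ℝ => Real.sinh (π*y)) (Real.cosh (π*x) * π) x :=
      (Real.hasDerivAt_sinh (π*x)).comp x hmul
    have hl1 := hsinh.log hs.ne'
    have hl2 : HasDerivAt (fun y : ℝ => Real.log (π*y)) (π / (π*x)) x := hmul.log hpx.ne'
    refine (hl1.sub hl2).congr_deriv ?_
    rw [div_mul_cancel_left₀ Real.pi_ne_zero]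
    ring
  -- G equals closed form near x
  have heq : (fun y : ℝ => ∑' k : ℕ, Real.log (1 + y^2/((k:ℝ)+1)^2))
      =ᶠ[nhds x] (fun y : ℝ => Real.log (Real.sinh (π*y)) - Real.log (π*y)) := by
    filter_upwards [Ioi_mem_nhds hx] with y hy
    exact (log_hasSum y hy).tsum_eq
  have hG2 : HasDerivAt (fun y : ℝ => Real.log (Real.sinh (π*y)) - Real.log (π*y))
      (∑' k : ℕ, 2*x/(((k:ℝ)+1)^2+x^2)) x := hG.congr_of_eventuallyEq heq.symm
  have hDeq := hG2.unique hcf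
  have h2x : (2*x) ≠ 0 := by positivity
  have : ∑' k : ℕ, 2*x/(((k:ℝ)+1)^2+x^2) = (2*x) * ∑' k : ℕ, ((((k:ℝ)+1)^2+x^2))⁻¹ := by
    rw [← tsum_mul_left]
    simp [div_eq_mul_inv]
  rw [this] at hDeq
  field_simp at hDeq ⊢
  linarith

lemma tsum_inv_sq_add_sq (x : ℝ) (hx : 0 < x) :
    ∑' k : ℕ, ((((k:ℝ)+1)^2 + x^2)^2)⁻¹ =
      (π^2*x + π * Real.cosh (π*x) * Real.sinh (π*x)) / (4*x^3*(Real.sinh (π*x))^2)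
        - 1/(2*x^4) := by
  have hpx : 0 < π * x := by positivity
  have hs : 0 < Real.sinh (π*x) := Real.sinh_pos_iff.mpr hpx
  -- global term-wise derivative of F
  have hterm : ∀ (k : ℕ) (y : ℝ), HasDerivAt (fun y : ℝ => ((((k:ℝ)+1)^2 + y^2))⁻¹)
      (-(2*y)/((((k:ℝ)+1)^2 + y^2)^2)) y := by
    intro k y
    have hden : HasDerivAt (fun y : ℝ => ((k:ℝ)+1)^2 + y^2) (2*y) y := by
      simpa using (hasDerivAt_pow 2 y).const_add (((k:ℝ)+1)^2)
    exact hden.inv (by positivity)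
  have hu : Summable (fun k : ℕ => ((((k:ℝ)+1))^3)⁻¹) := by
    have : Summable (fun k : ℕ => 1/((k:ℝ)+1)^3) := by
      exact_mod_cast (summable_nat_add_iff 1).mpr
        (Real.summable_one_div_nat_pow.mpr (by norm_num))
    exact this.congr (fun k => by rw [one_div])
  have hbound : ∀ (k : ℕ) (y : ℝ),
      ‖-(2*y)/((((k:ℝ)+1)^2 + y^2)^2)‖ ≤ ((((k:ℝ)+1))^3)⁻¹ := by
    intro k y
    have hc : (1:ℝ) ≤ (k:ℝ)+1 := by simp
    rw [Real.norm_eq_abs, abs_div, abs_neg, abs_of_pos (by positivity :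
      (0:ℝ) < (((k:ℝ)+1)^2 + y^2)^2), ← one_div, div_le_div_iff₀ (by positivity) (by positivity)]
    have h1 : |2*y| = 2*|y| := by rw [abs_mul]; norm_num
    rw [h1]
    nlinarith [sq_abs y, abs_nonneg y, sq_nonneg (((k:ℝ)+1)*(((k:ℝ)+1) - |y|)),
      sq_nonneg (((k:ℝ)+1)*|y|), sq_nonneg (|y|^2)]
  have hF : HasDerivAt (fun y : ℝ => ∑' k : ℕ, ((((k:ℝ)+1)^2 + y^2))⁻¹)
      (∑' k : ℕ, -(2*x)/((((k:ℝ)+1)^2 + x^2)^2)) x :=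
    hasDerivAt_tsum hu hterm hbound (y₀ := 0) (by simpa using summable_inv_sq_add 0) x
  -- closed form and its derivative
  set s := Real.sinh (π*x) with hsdef
  set c := Real.cosh (π*x) with hcdef
  have hmul : HasDerivAt (fun y : ℝ => π*y) π x := by
    simpa using (hasDerivAt_id x).const_mul π
  have hsinh : HasDerivAt (fun y : ℝ => Real.sinh (π*y)) (c * π) x :=
    (Real.hasDerivAt_sinh (π*x)).comp x hmul
  have hcosh : HasDerivAt (fun y : ℝ => Real.cosh (π*y)) (s * π) x :=
    (Real.hasDerivAt_cosh (π*x)).comp x hmul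
  have hq : HasDerivAt (fun y : ℝ => π * Real.cosh (π*y) / Real.sinh (π*y))
      ((π * (s*π) * s - π * c * (c*π)) / s^2) x := (hcosh.const_mul π).div hsinh hs.ne'
  have hinv : HasDerivAt (fun y : ℝ => 1/y) (-(x^2)⁻¹) x := by
    simpa [one_div] using hasDerivAt_inv hx.ne'
  have hden2 : HasDerivAt (fun y : ℝ => 2*y) 2 x := by
    simpa using (hasDerivAt_id x).const_mul 2
  have hcf : HasDerivAt (fun y : ℝ => (π * Real.cosh (π*y) / Real.sinh (π*y) - 1/y) / (2*y))
      ((((π * (s*π) * s - π * c * (c*π)) / s^2 - -(x^2)⁻¹) * (2*x)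
        - (π * c / s - 1/x) * 2) / (2*x)^2) x := (hq.sub hinv).div hden2 (by positivity)
  -- F agrees with closed form on Ioi 0
  have heq : (fun y : ℝ => ∑' k : ℕ, ((((k:ℝ)+1)^2 + y^2))⁻¹)
      =ᶠ[nhds x] (fun y : ℝ => (π * Real.cosh (π*y) / Real.sinh (π*y) - 1/y) / (2*y)) := by
    filter_upwards [Ioi_mem_nhds hx] with y hy
    exact tsum_inv_sq_add y hy
  have hG2 := hF.congr_of_eventuallyEq heq.symm
  have hDeq := hG2.unique hcf
  have hsum : ∑' k : ℕ, -(2*x)/((((k:ℝ)+1)^2 + x^2)^2)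
      = (-(2*x)) * ∑' k : ℕ, ((((k:ℝ)+1)^2 + x^2)^2)⁻¹ := by
    rw [← tsum_mul_left]
    exact tsum_congr (fun k => by rw [div_eq_mul_inv])
  rw [hsum] at hDeq
  have hpyth : c^2 - s^2 = 1 := Real.cosh_sq_sub_sinh_sq (π*x)
  have h2x : (-(2*x)) ≠ 0 := by simp; positivity
  have hsolve : ∑' k : ℕ, ((((k:ℝ)+1)^2 + x^2)^2)⁻¹
      = ((((π * (s*π) * s - π * c * (c*π)) / s^2 - -(x^2)⁻¹) * (2*x)
        - (π * c / s - 1/x) * 2) / (2*x)^2) / (-(2*x)) := by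
    field_simp at hDeq ⊢
    linarith [hDeq]
  rw [hsolve]
  field_simp
  linear_combination (4*π^2*x^2) * hpyth

/-- For `V₀ > 0` and `a < b`,
`Σ_{k=1}^∞ (k²π²/(b−a)² + V₀)⁻² = [√V₀(b−a) sinh(2√V₀(b−a)) − 2cosh(2√V₀(b−a))
+ 2V₀(b−a)² + 2] / [8V₀² sinh²(√V₀(b−a))]`. -/
theorem zeta_two_constant_potential (a b V₀ : ℝ) (hab : a < b) (hV : 0 < V₀) :
    ∑' k : ℕ+, (((k : ℝ)^2 * Real.pi^2 / (b - a)^2 + V₀)^2)⁻¹ =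
      (Real.sqrt V₀ * (b - a) * Real.sinh (2 * Real.sqrt V₀ * (b - a))
        - 2 * Real.cosh (2 * Real.sqrt V₀ * (b - a)) + 2 * V₀ * (b - a)^2 + 2)
      / (8 * V₀^2 * (Real.sinh (Real.sqrt V₀ * (b - a)))^2) := by
  have hL : 0 < b - a := sub_pos.mpr hab
  have hv : 0 < Real.sqrt V₀ := Real.sqrt_pos.mpr hV
  have hv2 : Real.sqrt V₀ ^ 2 = V₀ := Real.sq_sqrt hV.le
  set v := Real.sqrt V₀ with hvdef
  set L := b - a with hLdef
  set t := v * L with htdef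
  have ht : 0 < t := by positivity
  set x := t / π with hxdef
  have hx : 0 < x := by positivity
  have hπx : π * x = t := by
    rw [hxdef]; field_simp
  -- convert ℕ+ sum to ℕ sum
  have hconv : ∑' k : ℕ+, (((k : ℝ)^2 * π^2 / L^2 + V₀)^2)⁻¹
      = ∑' n : ℕ, (((((n:ℝ)+1))^2 * π^2 / L^2 + V₀)^2)⁻¹ := by
    rw [← Equiv.pnatEquivNat.symm.tsum_eq]
    refine tsum_congr (fun n => ?_)
    have : ((Equiv.pnatEquivNat.symm n : ℕ+) : ℝ) = (n : ℝ) + 1 := by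
      simp [Equiv.pnatEquivNat]
    rw [this]
  rw [hconv]
  -- per-term rewriting
  have hterm : ∀ n : ℕ, (((((n:ℝ)+1))^2 * π^2 / L^2 + V₀)^2)⁻¹
      = (L^4/π^4) * (((((n:ℝ)+1))^2 + x^2)^2)⁻¹ := by
    intro n
    have hxsq : x^2 = V₀*L^2/π^2 := by
      rw [hxdef, htdef, div_pow, mul_pow, hv2]
    have h1 : ((((n:ℝ)+1))^2 * π^2 / L^2 + V₀) = (π^2/L^2) * ((((n:ℝ)+1))^2 + x^2) := by
      rw [hxsq]; field_simp
    rw [h1, mul_pow, mul_inv]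
    have : (((π^2/L^2))^2)⁻¹ = L^4/π^4 := by
      field_simp
    rw [this]
  simp_rw [hterm]
  rw [tsum_mul_left, tsum_inv_sq_add_sq x hx, hπx]
  -- final algebra
  have harg : 2 * v * L = 2 * t := by rw [htdef]; ring
  rw [harg, Real.sinh_two_mul, Real.cosh_two_mul]
  set s := Real.sinh t with hsdef
  set c := Real.cosh t with hcdef
  have hsp : 0 < s := Real.sinh_pos_iff.mpr ht
  have hpyth : c^2 - s^2 = 1 := Real.cosh_sq_sub_sinh_sq t
  have hπ : (0:ℝ) < π := Real.pi_pos
  rw [← hv2]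
  clear_value s c
  rw [hxdef, htdef]
  clear_value v L
  field_simp
  linear_combination (16) * hpyth
end

section
/- For V₀ > 0 with V₀ ≠ k²π²/(b−a)² for all k ∈ ℕ, Σ_{k=1}^∞ (k²π²/(b−a)² − V₀)^{−1} = [√V₀ (a−b) cot(√V₀(b−a)) + 1] / (2V₀), where the series converges absolutely (interpreting terms as signed reals). -/
open Real intervalIntegral

private lemma intExpAux {c : ℝ} (hc : c ≠ 0) :
    ∫ t in (-π)..π, Complex.exp (c * Complex.I * t) =
      ((2 * Real.sin (c * π) / c : ℝ) : ℂ) := by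
  have hc' : (c : ℂ) * Complex.I ≠ 0 :=
    mul_ne_zero (by exact_mod_cast hc) Complex.I_ne_zero
  have h := integral_exp_mul_complex (a := -π) (b := π) hc'
  rw [h]
  have e1 : (c : ℂ) * Complex.I * (π : ℝ) = ((c * π : ℝ) : ℂ) * Complex.I := by
    push_cast; ring
  have e2 : (c : ℂ) * Complex.I * ((-π : ℝ) : ℂ) = -(((c * π : ℝ) : ℂ)) * Complex.I := by
    push_cast; ring
  rw [e1, e2, Complex.exp_mul_I, Complex.exp_mul_I, Complex.cos_neg, Complex.sin_neg,
    ← Complex.ofReal_sin, ← Complex.ofReal_cos]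
  have hcC : (c : ℂ) ≠ 0 := by exact_mod_cast hc
  field_simp
  rw [Complex.ofReal_div, Complex.ofReal_mul, Complex.ofReal_ofNat]
  linear_combination (-(2 * (Real.sin (c*π) : ℂ) * Complex.I)) * mul_inv_cancel₀ hcC

private lemma cosAux (y : ℝ) :
    ((Real.cos y : ℝ) : ℂ) =
      (Complex.exp ((y : ℝ) * Complex.I) + Complex.exp ((-y : ℝ) * Complex.I)) / 2 := by
  rw [Complex.exp_mul_I, Complex.exp_mul_I]
  push_cast
  rw [Complex.cos_neg, Complex.sin_neg, ← Complex.ofReal_cos]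
  ring

private lemma coreCoeff {x : ℝ} (hxz : ∀ n : ℤ, x ≠ (n : ℝ)) (n : ℤ) :
    (1 / (2*π) : ℝ) • ∫ t in (-π)..π,
      (fourier (-n) (t : AddCircle (2*π))) * ((Real.cos (x*t) : ℝ) : ℂ) =
      (((-1:ℝ)^n * Real.sin (π*x) / π * (x / (x^2 - (n:ℝ)^2)) : ℝ) : ℂ) := by
  have h1 : x - n ≠ 0 := sub_ne_zero.mpr (hxz n)
  have h2 : x + n ≠ 0 := by
    have := hxz (-n); intro h; apply this; push_cast; linarith
  have hint : ∀ t : ℝ, (fourier (-n) (t : AddCircle (2*π))) * ((Real.cos (x*t) : ℝ) : ℂ) =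
      (Complex.exp (((x - n : ℝ)) * Complex.I * t) +
        Complex.exp (((-(x + n) : ℝ)) * Complex.I * t)) / 2 := by
    intro t
    have key : ∀ u v w : ℂ, Complex.exp u * ((Complex.exp v + Complex.exp w) / 2)
        = (Complex.exp (u+v) + Complex.exp (u+w))/2 := by
      intro u v w; rw [Complex.exp_add, Complex.exp_add]; ring
    rw [fourier_coe_apply, cosAux (x*t), key]
    have hπ : (π:ℂ) ≠ 0 := by exact_mod_cast Real.pi_ne_zero
    congr 3
    · push_cast
      field_simp
      ring
    · push_cast
      field_simp
      ring
  rw [intervalIntegral.integral_congr (g := fun t => (Complex.exp (((x - n : ℝ)) * Complex.I * t) +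
        Complex.exp (((-(x + n) : ℝ)) * Complex.I * t)) / 2) (fun t _ => hint t)]
  rw [intervalIntegral.integral_div]
  have hI : ∀ c : ℝ, IntervalIntegrable (fun t : ℝ => Complex.exp ((c:ℂ) * Complex.I * t))
      MeasureTheory.volume (-π) π := fun c => (by fun_prop : Continuous _).intervalIntegrable _ _
  rw [intervalIntegral.integral_add (hI (x - n)) (hI (-(x + n)))]
  rw [intExpAux h1, intExpAux (neg_ne_zero.mpr h2)]
  have hcn : Real.cos ((n:ℝ)*π) = (-1)^n := by
    simpa using Real.cos_int_mul_pi_sub 0 n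
  have hs1 : Real.sin ((x - n)*π) = (-1)^n * Real.sin (π*x) := by
    rw [sub_mul, Real.sin_sub, Real.sin_int_mul_pi, hcn, mul_comm x π]
    ring
  have hs2 : Real.sin (-(x + n)*π) = -((-1)^n * Real.sin (π*x)) := by
    rw [neg_mul, Real.sin_neg, add_mul, Real.sin_add, Real.sin_int_mul_pi, hcn, mul_comm x π]
    ring
  rw [hs1, hs2, Complex.real_smul]
  norm_cast
  have h3 : x^2 - (n:ℝ)^2 ≠ 0 := by
    rw [sq_sub_sq]; exact mul_ne_zero h2 h1
  rw [mul_neg, neg_div_neg_eq]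
  field_simp [Real.pi_ne_zero]
  push_cast
  linear_combination (-(x * Real.sin (π*x) * 2)) * mul_inv_cancel₀ h3

private lemma core {x : ℝ} (hx : 0 < x) (hxz : ∀ n : ℤ, x ≠ (n : ℝ)) :
    HasSum (fun k : ℕ+ => (((k : ℕ) : ℝ)^2 - x^2)⁻¹)
      ((1 - π * x * Real.cot (π * x)) / (2 * x^2)) := by
  haveI : Fact (0 < 2*π) := ⟨by positivity⟩
  set g : ℝ → ℂ := fun t => ((Real.cos (x*t) : ℝ) : ℂ) with hg
  have hgper : g (-π) = g (-π + 2*π) := by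
    simp only [hg]
    norm_cast
    rw [show -π + 2*π = π by ring, mul_neg, Real.cos_neg]
  have hgcont : ContinuousOn g (Set.Icc (-π) (-π + 2*π)) := by
    apply Continuous.continuousOn; fun_prop
  set f : C(AddCircle (2*π), ℂ) :=
    ⟨AddCircle.liftIco (2*π) (-π) g, AddCircle.liftIco_continuous hgper hgcont⟩ with hf
  have hmem : ∀ t : ℝ, t ∈ Set.Ico (-π) (-π + 2*π) → f ↑t = g t := fun t ht => by
    simp only [hf, ContinuousMap.coe_mk]
    exact AddCircle.liftIco_coe_apply ht
  have hππ : ((π : ℝ) : AddCircle (2*π)) = ((-π : ℝ) : AddCircle (2*π)) := by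
    have h1 : ((π : ℝ) : AddCircle (2*π)) = ((-π + 2*π : ℝ) : AddCircle (2*π)) :=
      congrArg _ (by ring)
    rw [h1, AddCircle.coe_add_period]
  have hmem' : (-π : ℝ) ∈ Set.Ico (-π) (-π + 2*π) := ⟨le_refl _, by linarith [Real.pi_pos]⟩
  have hfπ : f ((π:ℝ) : AddCircle (2*π)) = ((Real.cos (x*π) : ℝ) : ℂ) := by
    rw [hππ, hmem (-π) hmem']
    simp only [hg]
    norm_cast
    rw [mul_neg, Real.cos_neg]
  have hcoeff : ∀ n : ℤ, fourierCoeff (⇑f) n =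
      (((-1:ℝ)^n * Real.sin (π*x) / π * (x / (x^2 - (n:ℝ)^2)) : ℝ) : ℂ) := by
    intro n
    rw [fourierCoeff_eq_intervalIntegral (⇑f) n (-π), show -π + 2*π = π by ring,
      ← coreCoeff hxz n]
    congr 1
    apply intervalIntegral.integral_congr
    intro t ht
    rw [Set.uIcc_of_le (by linarith [Real.pi_pos] : -π ≤ π)] at ht
    by_cases htp : t = π
    · subst htp
      beta_reduce
      rw [hππ, hmem (-π) hmem', smul_eq_mul]
      congr 1
      simp only [hg]
      norm_cast
      rw [mul_neg, Real.cos_neg]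
    · have : t ∈ Set.Ico (-π) (-π + 2*π) := by
        constructor
        · exact ht.1
        · rw [show -π + 2*π = π by ring]
          exact lt_of_le_of_ne ht.2 htp
      beta_reduce
      rw [hmem t this, smul_eq_mul]
  -- summability of the Fourier coefficients
  have hs : Real.sin (π*x) ≠ 0 := by
    intro h
    rcases Real.sin_eq_zero_iff.mp h with ⟨n, hn⟩
    apply hxz n
    have h2 : π * x = π * (n:ℝ) := by linarith
    exact (mul_left_cancel₀ Real.pi_ne_zero h2)
  have hNat : Summable (fun n : ℕ => |x / (x^2 - (n:ℝ)^2)|) := by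
    have hb : Summable (fun n : ℕ => 2*x * ((1:ℝ) / (n:ℝ)^2)) :=
      (Real.summable_one_div_nat_pow.mpr one_lt_two).mul_left _
    apply hb.of_norm_bounded_eventually_nat
    filter_upwards [Filter.eventually_ge_atTop (⌈2*x⌉₊ + 1)] with n hn
    have h1 : (2*x : ℝ) ≤ n := by
      calc (2*x:ℝ) ≤ (⌈2*x⌉₊ : ℝ) := Nat.le_ceil _
        _ ≤ n := by exact_mod_cast Nat.le_of_succ_le hn
    have hn0 : (0:ℝ) < n := by nlinarith
    have hlt : x^2 - (n:ℝ)^2 < 0 := by nlinarith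
    rw [Real.norm_eq_abs, abs_abs, abs_div, abs_of_pos hx, abs_of_neg hlt]
    have e : 2*x*((1:ℝ)/(n:ℝ)^2) = 2*x/(n:ℝ)^2 := by ring
    rw [e, div_le_div_iff₀ (by linarith) (by positivity)]
    nlinarith [mul_nonneg (sub_nonneg.mpr h1) (by linarith : (0:ℝ) ≤ (n:ℝ) + 2*x),
      mul_pos (mul_pos hx hx) hx]
  have hZ : Summable (fun n : ℤ => ‖fourierCoeff (⇑f) n‖) := by
    have habs : ∀ n : ℤ, ‖fourierCoeff (⇑f) n‖
        = |Real.sin (π*x)| / π * |x / (x^2 - (n:ℝ)^2)| := by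
      intro n
      rw [hcoeff n, Complex.norm_real, Real.norm_eq_abs, abs_mul, abs_div, abs_mul]
      have h2 : ((-1:ℝ)^n)*((-1:ℝ)^n) = 1 := by
        rw [← zpow_add₀ (by norm_num : (-1:ℝ) ≠ 0), ← two_mul, zpow_mul]
        norm_num
      have h3 : |(-1:ℝ)^n| = 1 := by
        rcases mul_self_eq_one_iff.mp h2 with h | h <;> rw [h] <;> norm_num
      rw [h3, one_mul, abs_of_pos Real.pi_pos]
    have key : Summable (fun n : ℤ => |Real.sin (π*x)| / π * |x / (x^2 - (n:ℝ)^2)|) := by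
      apply Summable.mul_left
      apply Summable.of_nat_of_neg
      · exact hNat
      · apply hNat.congr
        intro n
        norm_num
    exact key.congr fun n => (habs n).symm
  have hsum : Summable (fourierCoeff (⇑f)) := hZ.of_norm
  -- pointwise convergence at t = π
  have H := has_pointwise_sum_fourier_series_of_summable hsum ((π:ℝ) : AddCircle (2*π))
  have hfour : ∀ n : ℤ, (fourier n ((π:ℝ) : AddCircle (2*π)) : ℂ) = (-1:ℂ)^n := by
    intro n
    rw [fourier_coe_apply]
    have harg : 2 * (π:ℂ) * Complex.I * (n:ℤ) * (π:ℝ) / ((2*π : ℝ):ℂ)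
        = (n:ℤ) * ((π:ℂ) * Complex.I) := by
      have hπ : (π:ℂ) ≠ 0 := by exact_mod_cast Real.pi_ne_zero
      push_cast
      field_simp
    rw [harg, Complex.exp_int_mul, Complex.exp_pi_mul_I]
  have hterm : ∀ n : ℤ, fourierCoeff (⇑f) n • fourier n ((π:ℝ) : AddCircle (2*π))
      = ((Real.sin (π*x) / π * (x / (x^2 - (n:ℝ)^2)) : ℝ) : ℂ) := by
    intro n
    rw [smul_eq_mul, hcoeff n, hfour n]
    have hone : ((-1:ℂ)^n) * ((-1:ℂ)^n) = 1 := by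
      rw [← zpow_add₀ (by norm_num : (-1:ℂ) ≠ 0), ← two_mul, zpow_mul]
      norm_num
    push_cast
    linear_combination (Complex.sin ((π:ℂ) * (x:ℂ)) / π * ((x:ℂ) / ((x:ℂ)^2 - (n:ℂ)^2))) * hone
  have H2 : HasSum (fun n : ℤ => ((Real.sin (π*x) / π * (x / (x^2 - (n:ℝ)^2)) : ℝ) : ℂ))
      ((Real.cos (x*π) : ℝ) : ℂ) := by
    rw [← funext hterm, ← hfπ]
    exact H
  have HR : HasSum (fun n : ℤ => Real.sin (π*x) / π * (x / (x^2 - (n:ℝ)^2)))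
      (Real.cos (x*π)) := Complex.hasSum_ofReal.mp H2
  -- rescale
  have HR2 : HasSum (fun n : ℤ => x / (x^2 - (n:ℝ)^2)) (π * Real.cot (π*x)) := by
    have h := HR.mul_left (π / Real.sin (π*x))
    have e1 : (fun n : ℤ => π / Real.sin (π*x) * (Real.sin (π*x) / π * (x / (x^2 - (n:ℝ)^2))))
        = fun n : ℤ => x / (x^2 - (n:ℝ)^2) := by
      funext n
      have hone : π / Real.sin (π*x) * (Real.sin (π*x) / π) = 1 := by
        field_simp
      rw [← mul_assoc, hone, one_mul]
    have e2 : π / Real.sin (π*x) * Real.cos (x*π) = π * Real.cot (π*x) := by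
      rw [Real.cot_eq_cos_div_sin, mul_comm x π]
      field_simp
    rwa [e1, e2] at h
  have h := HR2.nat_add_neg
  norm_num [neg_sq] at h
  have h2 := (hasSum_nat_add_iff'
    (f := fun n : ℕ => x/(x^2 - (n:ℝ)^2) + x/(x^2 - (n:ℝ)^2)) 1).mpr h
  norm_num at h2
  have h3 : HasSum (fun n : ℕ => ((((n:ℕ)+1):ℝ)^2 - x^2)⁻¹)
      ((1 - π * Real.cot (π*x) * x) / (2*x^2)) := by
    have h4 := h2.mul_left (-(2*x)⁻¹)
    have efn : (fun n : ℕ => -(2*x)⁻¹ * (x/(x^2 - ((n:ℝ)+1)^2) + x/(x^2 - ((n:ℝ)+1)^2)))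
        = fun n : ℕ => ((((n:ℕ)+1):ℝ)^2 - x^2)⁻¹ := by
      funext n
      have hne1 : x - ((n:ℝ)+1) ≠ 0 := by
        have h5 := hxz ((n:ℤ)+1)
        intro hh; apply h5; push_cast; linarith
      have hne2 : x + ((n:ℝ)+1) ≠ 0 := by positivity
      have hne : x^2 - ((n:ℝ)+1)^2 ≠ 0 := by
        rw [sq_sub_sq]; exact mul_ne_zero hne2 hne1
      have hne' : ((n:ℝ)+1)^2 - x^2 ≠ 0 := by
        intro hh; apply hne; linarith
      push_cast
      field_simp
      ring
    rw [efn] at h4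
    convert h4 using 1
    · rfl
    field_simp
    ring
  have hval : (1 - π * x * Real.cot (π*x)) / (2*x^2) = (1 - π * Real.cot (π*x) * x) / (2*x^2) := by
    ring
  rw [hval]
  have e := Equiv.pnatEquivNat.symm.hasSum_iff
    (f := fun k : ℕ+ => (((k:ℕ):ℝ)^2 - x^2)⁻¹)
    (a := (1 - π * Real.cot (π*x) * x) / (2*x^2))
  apply e.mp
  have ecomp : (fun k : ℕ+ => (((k:ℕ):ℝ)^2 - x^2)⁻¹) ∘ ⇑Equiv.pnatEquivNat.symm
      = fun n : ℕ => ((((n:ℕ)+1):ℝ)^2 - x^2)⁻¹ := by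
    funext n
    simp [Equiv.pnatEquivNat, Function.comp]
  rw [ecomp]
  exact h3
/-- For `V₀ > 0` with `V₀ ≠ k²π²/(b−a)²` for all `k ∈ ℕ`, the series
`Σ_{k=1}^∞ (k²π²/(b−a)² − V₀)⁻¹` converges absolutely and equals
`[√V₀ (a−b) cot(√V₀(b−a)) + 1] / (2V₀)`. -/
theorem trace_inverse_negative_constant_potential (a b V₀ : ℝ) (hab : a < b) (hV : 0 < V₀)
    (hne : ∀ k : ℕ+, V₀ ≠ (k : ℝ)^2 * Real.pi^2 / (b - a)^2) :
    Summable (fun k : ℕ+ => ((k : ℝ)^2 * Real.pi^2 / (b - a)^2 - V₀)⁻¹) ∧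
    ∑' k : ℕ+, ((k : ℝ)^2 * Real.pi^2 / (b - a)^2 - V₀)⁻¹ =
      (Real.sqrt V₀ * (a - b) * Real.cot (Real.sqrt V₀ * (b - a)) + 1) / (2 * V₀) := by
  have hL0 : 0 < b - a := by linarith
  set x := Real.sqrt V₀ * (b - a) / π with hxdef
  have hsq : 0 < Real.sqrt V₀ := Real.sqrt_pos.mpr hV
  have hx : 0 < x := div_pos (mul_pos hsq hL0) Real.pi_pos
  have hx2 : x^2 = V₀ * (b - a)^2 / π^2 := by
    rw [hxdef, div_pow, mul_pow, Real.sq_sqrt hV.le]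
  have hπx : π * x = Real.sqrt V₀ * (b - a) := by
    rw [hxdef]
    field_simp
  have hxz : ∀ n : ℤ, x ≠ (n : ℝ) := by
    intro n hn
    have hn0 : (0:ℝ) < (n:ℝ) := hn ▸ hx
    have hn0' : 0 < n := by exact_mod_cast hn0
    have hpos : 0 < n.toNat := by omega
    apply hne ⟨n.toNat, hpos⟩
    show V₀ = ((n.toNat : ℕ) : ℝ)^2 * π^2 / (b - a)^2
    have hcast : ((n.toNat : ℕ) : ℝ) = (n : ℝ) := by
      rw [← Int.cast_natCast, Int.toNat_of_nonneg hn0'.le]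
    rw [hcast]
    have hsv : Real.sqrt V₀ = (n:ℝ) * π / (b - a) := by
      have : Real.sqrt V₀ * (b - a) / π = (n:ℝ) := hn ▸ rfl
      field_simp at this ⊢
      linarith
    have h2 : V₀ = (Real.sqrt V₀)^2 := (Real.sq_sqrt hV.le).symm
    rw [h2, hsv, div_pow, mul_pow]
  have hcore := core hx hxz
  have hsum2 := hcore.mul_left ((b - a)^2 / π^2)
  have hfun : (fun k : ℕ+ => (b - a)^2 / π^2 * ((((k:ℕ):ℝ))^2 - x^2)⁻¹)
      = fun k : ℕ+ => ((k : ℝ)^2 * π^2 / (b - a)^2 - V₀)⁻¹ := by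
    funext k
    have hfact : (k:ℝ)^2 * π^2 / (b - a)^2 - V₀ = (π^2/(b - a)^2) * (((k:ℕ):ℝ)^2 - x^2) := by
      rw [hx2]
      field_simp
    rw [hfact, mul_inv, inv_div]
  have hval : (b - a)^2 / π^2 * ((1 - π * x * Real.cot (π * x)) / (2*x^2))
      = (Real.sqrt V₀ * (a - b) * Real.cot (Real.sqrt V₀ * (b - a)) + 1) / (2 * V₀) := by
    rw [hπx, hx2]
    field_simp
    ring
  rw [hfun, hval] at hsum2
  exact ⟨hsum2.summable, hsum2.tsum_eq⟩
end
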